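/- For all x > 0, the integral ∫₀^∞ e^{-(x+y)²/2} y² dy is at least [2 - e^{-(x+1/2)}(x² + 3x + 13/4)] / (x + 1/2)³ · e^{-x²/2}. -/

import Mathlib

open MeasureTheory Real

lemma aux_deriv_5 (c : ℝ) (hcpos : 0 < c) (y : ℝ) : HasDerivAt
    (fun y => -(Real.exp (-c * y)) * (y ^ 2 / c + 2 * y / c ^ 2 + 2 / c ^ 3))
    (Real.exp (-c * y) * y ^ 2) y := by
  have h1 : HasDerivAt (fun y : ℝ => Real.exp (-c * y)) (Real.exp (-c * y) * (-c)) y := by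
    simpa using ((hasDerivAt_id y).const_mul (-c)).exp
  have h2 : HasDerivAt (fun y : ℝ => y ^ 2 / c + 2 * y / c ^ 2 + 2 / c ^ 3)
      ((2 * y ^ 1) / c + 2 / c ^ 2) y := by
    have := (((hasDerivAt_pow 2 y).div_const c).add
      (((hasDerivAt_id y).const_mul 2).div_const (c ^ 2))).add_const (2 / c ^ 3)
    simpa using this
  have hc' : c ≠ 0 := ne_of_gt hcpos
  have hD := (h1.mul h2).neg
  have key : Real.exp (-c * y) * y ^ 2 =
      -(Real.exp (-c * y) * -c * (y ^ 2 / c + 2 * y / c ^ 2 + 2 / c ^ 3) +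
        Real.exp (-c * y) * (2 * y ^ 1 / c + 2 / c ^ 2)) := by
    field_simp
    ring
  rw [key]
  have hf : (fun y => -(Real.exp (-c * y)) * (y ^ 2 / c + 2 * y / c ^ 2 + 2 / c ^ 3)) =
      -((fun y : ℝ => Real.exp (-c * y)) * fun y : ℝ => y ^ 2 / c + 2 * y / c ^ 2 + 2 / c ^ 3) := by
    ext z
    simp [neg_mul]
  rw [hf]
  exact hD

lemma aux_int_5 (c : ℝ) (hcpos : 0 < c) :
    ∫ y in Set.Ioc (0:ℝ) 1, Real.exp (-c * y) * y ^ 2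
      = (2 - Real.exp (-c) * (c ^ 2 + 2 * c + 2)) / c ^ 3 := by
  have hcont : Continuous fun y : ℝ => Real.exp (-c * y) * y ^ 2 := by continuity
  have := intervalIntegral.integral_eq_sub_of_hasDerivAt
    (f := fun y => -(Real.exp (-c * y)) * (y ^ 2 / c + 2 * y / c ^ 2 + 2 / c ^ 3))
    (a := 0) (b := 1) (fun y _ => aux_deriv_5 c hcpos y)
    (hcont.intervalIntegrable 0 1)
  rw [intervalIntegral.integral_of_le (by norm_num : (0:ℝ) ≤ 1)] at this
  rw [this]
  have hc' : c ≠ 0 := ne_of_gt hcpos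
  field_simp
  simp only [mul_zero, neg_zero, Real.exp_zero]
  ring

theorem stmt_5 (x : ℝ) (hx : 0 < x) :
    (2 - Real.exp (-(x + 1 / 2)) * (x ^ 2 + 3 * x + 13 / 4)) / (x + 1 / 2) ^ 3 *
        Real.exp (-x ^ 2 / 2) ≤
      ∫ y in Set.Ioi (0 : ℝ), Real.exp (-(x + y) ^ 2 / 2) * y ^ 2 := by
  set c : ℝ := x + 1 / 2 with hc
  have hcpos : 0 < c := by positivity
  have hI := aux_int_5 c hcpos
  -- integrability on Ioi 0
  have hmeas : AEStronglyMeasurable (fun y : ℝ => Real.exp (-(x + y) ^ 2 / 2) * y ^ 2)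
      (volume.restrict (Set.Ioi (0:ℝ))) :=
    (Continuous.mul (by continuity) (by continuity)).aestronglyMeasurable
  have hint : IntegrableOn (fun y : ℝ => Real.exp (-(x + y) ^ 2 / 2) * y ^ 2)
      (Set.Ioi (0:ℝ)) := by
    have h0 : IntegrableOn (fun y : ℝ => y ^ (2:ℝ) * Real.exp (-(1/2:ℝ) * y ^ 2))
        (Set.Ioi (0:ℝ)) :=
      integrableOn_rpow_mul_exp_neg_mul_sq (by norm_num) (by norm_num : (-1:ℝ) < 2)
    simp_rw [Real.rpow_two] at h0
    refine h0.mono' hmeas ?_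
    filter_upwards [ae_restrict_mem measurableSet_Ioi] with y hy
    have hy0 : 0 ≤ y := le_of_lt hy
    rw [Real.norm_eq_abs, abs_of_nonneg (by positivity)]
    have h1 : Real.exp (-(x + y) ^ 2 / 2) ≤ Real.exp (-(1/2 : ℝ) * y ^ 2) := by
      apply Real.exp_le_exp.mpr
      nlinarith [sq_nonneg x, mul_nonneg hx.le hy0]
    nlinarith [sq_nonneg y, Real.exp_pos (-(1/2 : ℝ) * y ^ 2)]
  -- nonnegativity
  have hnonneg : 0 ≤ᵐ[volume.restrict (Set.Ioi (0:ℝ))]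
      fun y : ℝ => Real.exp (-(x + y) ^ 2 / 2) * y ^ 2 := by
    filter_upwards with y
    positivity
  -- pointwise bound on Ioc 0 1
  have hpt : ∀ y ∈ Set.Ioc (0:ℝ) 1,
      Real.exp (-x ^ 2 / 2) * (Real.exp (-c * y) * y ^ 2)
      ≤ Real.exp (-(x + y) ^ 2 / 2) * y ^ 2 := by
    intro y hy
    have hy0 : 0 ≤ y := hy.1.le
    have hy1 : y ≤ 1 := hy.2
    rw [← mul_assoc, ← Real.exp_add]
    apply mul_le_mul_of_nonneg_right _ (by positivity)
    apply Real.exp_le_exp.mpr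
    rw [hc]
    nlinarith [mul_nonneg hy0 (sub_nonneg.mpr hy1)]
  have hint1 : IntegrableOn (fun y : ℝ => Real.exp (-(x + y) ^ 2 / 2) * y ^ 2)
      (Set.Ioc (0:ℝ) 1) :=
    hint.mono_set Set.Ioc_subset_Ioi_self
  have hint2 : IntegrableOn
      (fun y : ℝ => Real.exp (-x ^ 2 / 2) * (Real.exp (-c * y) * y ^ 2))
      (Set.Ioc (0:ℝ) 1) := by
    apply Continuous.integrableOn_Ioc
    continuity
  have step1 : ∫ y in Set.Ioc (0:ℝ) 1,
        Real.exp (-x ^ 2 / 2) * (Real.exp (-c * y) * y ^ 2)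
      ≤ ∫ y in Set.Ioc (0:ℝ) 1, Real.exp (-(x + y) ^ 2 / 2) * y ^ 2 :=
    setIntegral_mono_on hint2 hint1 measurableSet_Ioc hpt
  have step2 : ∫ y in Set.Ioc (0:ℝ) 1, Real.exp (-(x + y) ^ 2 / 2) * y ^ 2
      ≤ ∫ y in Set.Ioi (0:ℝ), Real.exp (-(x + y) ^ 2 / 2) * y ^ 2 := by
    apply setIntegral_mono_set hint hnonneg
    filter_upwards with y
    exact fun hy => Set.Ioc_subset_Ioi_self hy
  have key : ∫ y in Set.Ioc (0:ℝ) 1,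
      Real.exp (-x ^ 2 / 2) * (Real.exp (-c * y) * y ^ 2)
      = (2 - Real.exp (-c) * (c ^ 2 + 2 * c + 2)) / c ^ 3 * Real.exp (-x ^ 2 / 2) := by
    rw [integral_const_mul, hI]; ring
  have hrw : (2 - Real.exp (-(x + 1 / 2)) * (x ^ 2 + 3 * x + 13 / 4)) / (x + 1 / 2) ^ 3
      = (2 - Real.exp (-c) * (c ^ 2 + 2 * c + 2)) / c ^ 3 := by
    rw [hc]; ring_nf
  rw [hrw, ← key]
  exact le_trans step1 step2
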